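/- Let κ ∈ Γ_k with κ₁ ≥ ⋯ ≥ κₙ ordered decreasingly and suppose σ_{k-1}(κ) ≤ σ_{k-2}(κ). Then κ_{k-1} ≤ C(n, k-2), where C(n, k-2) is the binomial coefficient 'n choose k-2'. -/

import Mathlib

namespace GammaAux

open Multiset Polynomial Finset

open Multiset Polynomial Finset

open Multiset Polynomial

/-- esymm of a cons -/
lemma mes_cons (a : ℝ) (M : Multiset ℝ) (m : ℕ) :
    (a ::ₘ M).esymm (m + 1) = a * M.esymm m + M.esymm (m + 1) := by
  rw [Multiset.esymm, Multiset.powersetCard_cons, Multiset.map_add, Multiset.sum_add,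
    Multiset.map_map, Multiset.esymm, Multiset.esymm]
  rw [add_comm]
  congr 1
  rw [← Multiset.sum_map_mul_left]
  apply congr_arg
  apply Multiset.map_congr rfl
  intro x _
  simp [Multiset.prod_cons]

lemma mes_zero (M : Multiset ℝ) : M.esymm 0 = 1 := by
  simp [Multiset.esymm, Multiset.powersetCard_zero_left]

lemma mprod_pos {M : Multiset ℝ} (h : ∀ x ∈ M, 0 < x) : 0 < M.prod := by
  induction M using Multiset.induction with
  | empty => simp
  | cons a s ih =>
    rw [Multiset.prod_cons]
    exact mul_pos (h a (Multiset.mem_cons_self a s))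
      (ih fun x hx => h x (Multiset.mem_cons_of_mem hx))

lemma mprod_nonneg {M : Multiset ℝ} (h : ∀ x ∈ M, 0 ≤ x) : 0 ≤ M.prod := by
  induction M using Multiset.induction with
  | empty => simp
  | cons a s ih =>
    rw [Multiset.prod_cons]
    exact mul_nonneg (h a (Multiset.mem_cons_self a s))
      (ih fun x hx => h x (Multiset.mem_cons_of_mem hx))

lemma mes_pos {M : Multiset ℝ} (h : ∀ x ∈ M, 0 < x) {m : ℕ} (hm : m ≤ Multiset.card M) :
    0 < M.esymm m := by
  have hne : M.powersetCard m ≠ 0 := by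
    intro hc
    have := Multiset.card_powersetCard m M
    rw [hc] at this
    simp only [Multiset.card_zero] at this
    exact absurd this.symm (Nat.choose_pos hm).ne'
  obtain ⟨t, ht⟩ := Multiset.exists_mem_of_ne_zero hne
  have htM : t ≤ M := (Multiset.mem_powersetCard.mp ht).1
  have hpos : 0 < t.prod := mprod_pos fun x hx => h x (Multiset.mem_of_le htM hx)
  have hle : t.prod ≤ ((M.powersetCard m).map Multiset.prod).sum := by
    apply Multiset.single_le_sum
    · intro x hx
      obtain ⟨u, hu, rfl⟩ := Multiset.mem_map.mp hx
      exact mprod_nonneg fun y hy => (h y (Multiset.mem_of_le (Multiset.mem_powersetCard.mp hu).1 hy)).le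
    · exact Multiset.mem_map_of_mem _ ht
  exact hpos.trans_le hle

/-- The key impossibility lemma: a real multiset cannot have
esymm_1..esymm_{k-2} > 0, esymm_{k-1} = 0, esymm_k > 0. -/
lemma Zzero (M : Multiset ℝ) (k : ℕ) (hk2 : 2 ≤ k) (hkN : k ≤ Multiset.card M)
    (hpos : ∀ j, 1 ≤ j → j ≤ k - 2 → 0 < M.esymm j)
    (hzero : M.esymm (k - 1) = 0) (hlast : 0 < M.esymm k) : False := by
  classical
  set N := Multiset.card M with hN
  set f : Polynomial ℝ := (M.map fun r => X + C r).prod with hf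
  have hfm : f.Monic := monic_multiset_prod_of_monic _ _ fun r _ => monic_X_add_C r
  have hfdeg : f.natDegree = N := by
    rw [hf, natDegree_multiset_prod_of_monic _ (fun p hp => by
      obtain ⟨r, _, rfl⟩ := Multiset.mem_map.mp hp; exact monic_X_add_C r)]
    rw [hN]
    simp [Multiset.map_map, Function.comp_def, natDegree_X_add_C]
  have hfroots : f.roots = M.map fun r => -r := by
    have hmm : M.map (fun r => (X + C r : Polynomial ℝ))
        = (M.map fun r => -r).map fun a => X - C a := by
      rw [Multiset.map_map]
      apply Multiset.map_congr rfl
      intro x _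
      simp [sub_neg_eq_add]
    rw [hf, hmm, roots_multiset_prod_X_sub_C]
  have hfcoeff : ∀ j ≤ N, f.coeff (N - j) = M.esymm j := by
    intro j hj
    rw [hf, Multiset.prod_X_add_C_coeff M (by omega : N - j ≤ Multiset.card M)]
    congr 1
    omega
  set d := N - k with hd
  set P := Polynomial.derivative^[d] f with hP
  have hPcoeff : ∀ j ≤ k, P.coeff (k - j) = ((N - j).descFactorial d : ℝ) * M.esymm j := by
    intro j hj
    rw [hP, Polynomial.coeff_iterate_derivative]
    rw [show k - j + d = N - j by omega]
    rw [hfcoeff j (by omega), nsmul_eq_mul]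
  have hPk : P.coeff k = (N.descFactorial d : ℝ) := by
    have := hPcoeff 0 (by omega)
    simpa [mes_zero] using this
  have hPkpos : 0 < P.coeff k := by
    rw [hPk]
    have : N.descFactorial d ≠ 0 := by
      rw [Ne, Nat.descFactorial_eq_zero_iff_lt]
      omega
    exact_mod_cast Nat.pos_of_ne_zero this
  have hPne : P ≠ 0 := fun h => by rw [h] at hPkpos; simp at hPkpos
  have hPdeg : P.natDegree = k := by
    apply le_antisymm
    · exact (natDegree_iterate_derivative f d).trans (by omega)
    · exact le_natDegree_of_ne_zero hPkpos.ne'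
  have hrootsge : k ≤ Multiset.card P.roots := by
    have chain : ∀ i : ℕ, N ≤ Multiset.card (Polynomial.derivative^[i] f).roots + i := by
      intro i
      induction i with
      | zero => simp [hfroots, hN]
      | succ i ih =>
        have := Polynomial.card_roots_le_derivative (Polynomial.derivative^[i] f)
        rw [Function.iterate_succ_apply']
        omega
    have h2 := chain d
    rw [show (⇑Polynomial.derivative)^[d] f = P from hP.symm] at h2
    omega
  have hrootsP : Multiset.card P.roots = k := by
    have h1 := P.card_roots'
    rw [hPdeg] at h1
    omega
  set c := P.coeff k with hc
  have hlc : P.leadingCoeff = c := by rw [Polynomial.leadingCoeff, hPdeg]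
  have hcne : c ≠ 0 := hPkpos.ne'
  -- factor P
  have hQfact : P = C c * (P.roots.map fun a => X - C a).prod := by
    have hQm : (P * C c⁻¹).Monic := by
      have := Polynomial.monic_mul_leadingCoeff_inv hPne
      rwa [hlc] at this
    have hQroots : (P * C c⁻¹).roots = P.roots := by
      rw [mul_comm, Polynomial.roots_C_mul _ (inv_ne_zero hcne)]
    have hQdeg : (P * C c⁻¹).natDegree = k := by
      rw [mul_comm, Polynomial.natDegree_C_mul (inv_ne_zero hcne), hPdeg]
    have := Polynomial.prod_multiset_X_sub_C_of_monic_of_roots_card_eq hQm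
      (by rw [hQroots, hQdeg, hrootsP])
    rw [hQroots] at this
    calc P = C c * (P * C c⁻¹) := by
            rw [mul_comm (C c), mul_assoc, ← Polynomial.C_mul, inv_mul_cancel₀ hcne]; simp
      _ = C c * (P.roots.map fun a => X - C a).prod := by rw [this]
  set S : Multiset ℝ := P.roots.map fun a => -a with hS
  have hcardS : Multiset.card S = k := by rw [hS, Multiset.card_map, hrootsP]
  have hPfact : P = C c * (S.map fun a => X + C a).prod := by
    rw [hQfact]
    congr 1
    rw [hS, Multiset.map_map]
    apply congr_arg
    apply Multiset.map_congr rfl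
    intro x _
    simp [sub_eq_add_neg]
  have hSesymm : ∀ j ≤ k, P.coeff (k - j) = c * S.esymm j := by
    intro j hj
    rw [hPfact, Polynomial.coeff_C_mul,
      Multiset.prod_X_add_C_coeff S (by omega : k - j ≤ Multiset.card S)]
    rw [hcardS]
    congr 2
    omega
  have key : ∀ j ≤ k, c * S.esymm j = ((N - j).descFactorial d : ℝ) * M.esymm j := by
    intro j hj
    rw [← hSesymm j hj, hPcoeff j hj]
  have hdescpos : ∀ j ≤ k, (0 : ℝ) < ((N - j).descFactorial d : ℕ) := by
    intro j hj
    have : (N - j).descFactorial d ≠ 0 := by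
      rw [Ne, Nat.descFactorial_eq_zero_iff_lt]
      omega
    exact_mod_cast Nat.pos_of_ne_zero this
  have hSesymm_nonneg : ∀ j ≤ k, 0 ≤ S.esymm j := by
    intro j hj
    have hkey := key j hj
    rcases Nat.eq_zero_or_pos j with rfl | hj1
    · rw [mes_zero]; norm_num
    rcases le_or_gt j (k - 2) with hj2 | hj2
    · have := mul_pos (hdescpos j hj) (hpos j hj1 hj2)
      nlinarith [hPkpos]
    rcases eq_or_lt_of_le hj with rfl | hjlt
    · have := mul_pos (hdescpos j le_rfl) hlast
      nlinarith [hPkpos]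
    · have hjk1 : j = k - 1 := by omega
      subst hjk1
      rw [hzero, mul_zero] at hkey
      have h2 : S.esymm (k-1) = 0 := (mul_eq_zero.mp hkey).resolve_left hcne
      rw [h2]
  have hSk : 0 < S.esymm k := by
    have hkey := key k le_rfl
    have h1 := mul_pos (hdescpos k le_rfl) hlast
    nlinarith [hPkpos]
  have hSk1 : S.esymm (k - 1) = 0 := by
    have hkey := key (k-1) (by omega)
    rw [hzero, mul_zero] at hkey
    rcases mul_eq_zero.mp hkey with h | h
    · exact absurd h (by exact_mod_cast hcne)
    · exact h
  -- all elements of S are positive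
  have hallpos : ∀ x ∈ S, 0 < x := by
    intro x hx
    by_contra hxn
    push_neg at hxn
    have heval0 : P.eval (-x) = 0 := by
      rw [hPfact, Polynomial.eval_mul, Polynomial.eval_C, Polynomial.eval_multiset_prod]
      have h0 : (0 : ℝ) ∈ (S.map fun a => X + C a).map (Polynomial.eval (-x)) := by
        rw [Multiset.map_map]
        refine Multiset.mem_map.mpr ⟨x, hx, ?_⟩
        simp
      rw [Multiset.prod_eq_zero h0, mul_zero]
    have heval2 : P.eval (-x) = ∑ i ∈ Finset.range (k + 1), P.coeff i * (-x) ^ i := by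
      rw [Polynomial.eval_eq_sum_range, hPdeg]
    have hterms : ∀ i ∈ Finset.range (k + 1), 0 ≤ P.coeff i * (-x) ^ i := by
      intro i hi
      have hik : i ≤ k := by simp at hi; omega
      have h1 : P.coeff i = c * S.esymm (k - i) := by
        have := hSesymm (k - i) (by omega)
        rwa [show k - (k - i) = i by omega] at this
      apply mul_nonneg
      · rw [h1]
        exact mul_nonneg hPkpos.le (hSesymm_nonneg (k - i) (by omega))
      · exact pow_nonneg (by linarith) i
    have hzero_mem : (0:ℕ) ∈ Finset.range (k + 1) := by simp
    have hpos0 : 0 < P.coeff 0 * (-x) ^ 0 := by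
      rw [pow_zero, mul_one]
      have h1 : P.coeff 0 = c * S.esymm k := by
        have := hSesymm k le_rfl
        rwa [Nat.sub_self] at this
      rw [h1]
      exact mul_pos hPkpos hSk
    have : 0 < ∑ i ∈ Finset.range (k + 1), P.coeff i * (-x) ^ i :=
      Finset.sum_pos' hterms ⟨0, hzero_mem, hpos0⟩
    rw [← heval2, heval0] at this
    exact lt_irrefl _ this
  have : 0 < S.esymm (k - 1) := mes_pos hallpos (by omega)
  rw [hSk1] at this
  exact lt_irrefl _ this


open Finset

variable {n : ℕ}

/-- elementary symmetric sum over an index set -/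
noncomputable def Esf (κ : Fin n → ℝ) (m : ℕ) (A : Finset (Fin n)) : ℝ :=
  ∑ s ∈ A.powersetCard m, ∏ i ∈ s, κ i

lemma Esf_eq_mes (κ : Fin n → ℝ) (m : ℕ) (A : Finset (Fin n)) :
    Esf κ m A = (A.val.map κ).esymm m := (Finset.esymm_map_val κ A m).symm

lemma Esf_zero (κ : Fin n → ℝ) (A : Finset (Fin n)) : Esf κ 0 A = 1 := by
  simp [Esf, Finset.powersetCard_zero]

lemma Esf_rec (κ : Fin n → ℝ) {A : Finset (Fin n)} {i : Fin n} (hi : i ∈ A) (m : ℕ) :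
    Esf κ (m + 1) A = κ i * Esf κ m (A.erase i) + Esf κ (m + 1) (A.erase i) := by
  rw [Esf_eq_mes, Esf_eq_mes, Esf_eq_mes]
  have h1 : A.val.map κ = κ i ::ₘ ((A.erase i).val.map κ) := by
    rw [Finset.erase_val, ← Multiset.map_cons, Multiset.cons_erase (by simpa using hi)]
  rw [h1, mes_cons]

/-- top-j index set -/
def Aset (n j : ℕ) : Finset (Fin n) := Finset.univ.filter (fun i => i.val < j)

/-- tail index set -/
def Bset (n j : ℕ) : Finset (Fin n) := Finset.univ.filter (fun i => j ≤ i.val)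

lemma mem_Aset {j : ℕ} {i : Fin n} : i ∈ Aset n j ↔ i.val < j := by simp [Aset]

lemma mem_Bset {j : ℕ} {i : Fin n} : i ∈ Bset n j ↔ j ≤ i.val := by simp [Bset]

lemma Aset_top : Aset n n = Finset.univ := by
  ext i; simp [mem_Aset, i.isLt]

lemma Bset_zero : Bset n 0 = Finset.univ := by
  ext i; simp [mem_Bset]

lemma Aset_succ {j : ℕ} (hj : j < n) :
    Aset n (j + 1) = insert ⟨j, hj⟩ (Aset n j) := by
  ext i
  simp only [mem_Aset, Finset.mem_insert, Fin.ext_iff]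
  omega

lemma not_mem_Aset {j : ℕ} (hj : j < n) : (⟨j, hj⟩ : Fin n) ∉ Aset n j := by
  simp [mem_Aset]

lemma mem_Aset_succ {j : ℕ} (hj : j < n) : (⟨j, hj⟩ : Fin n) ∈ Aset n (j + 1) := by
  simp [mem_Aset]

lemma Aset_succ_erase {j : ℕ} (hj : j < n) :
    (Aset n (j + 1)).erase ⟨j, hj⟩ = Aset n j := by
  rw [Aset_succ hj, Finset.erase_insert (not_mem_Aset hj)]

lemma mem_Bset_self {j : ℕ} (hj : j < n) : (⟨j, hj⟩ : Fin n) ∈ Bset n j := by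
  simp [mem_Bset]

lemma Bset_erase {j : ℕ} (hj : j < n) :
    (Bset n j).erase ⟨j, hj⟩ = Bset n (j + 1) := by
  ext i
  have hval : ((⟨j, hj⟩ : Fin n) : ℕ) = j := rfl
  simp only [mem_Bset, Finset.mem_erase, Fin.ext_iff]
  omega

lemma card_Aset {j : ℕ} (hj : j ≤ n) : (Aset n j).card = j := by
  induction j with
  | zero => simp [Aset]
  | succ j ih =>
    rw [Aset_succ (by omega), Finset.card_insert_of_notMem (not_mem_Aset (by omega)),
      ih (by omega)]

lemma card_Bset (j : ℕ) : (Bset n j).card = n - j := by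
  rcases le_or_gt j n with hj | hj
  · have h1 : Bset n j = (Aset n j)ᶜ := by
      ext i; simp [mem_Aset, mem_Bset, not_lt]
    rw [h1, Finset.card_compl, card_Aset hj, Fintype.card_fin]
  · have h1 : Bset n j = ∅ := by
      ext i; simp only [mem_Bset, Finset.notMem_empty, iff_false]; omega
    rw [h1]
    simp
    omega

/-- subset counting -/
lemma count_ext {α : Type*} [DecidableEq α] (A r : Finset α) (hr : r ⊆ A) {m : ℕ}
    (hi : r.card ≤ m) :
    ((A.powersetCard m).filter (fun s => r ⊆ s)).card
      = (A.card - r.card).choose (m - r.card) := by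
  rw [← Finset.card_sdiff_of_subset hr, ← Finset.card_powersetCard]
  apply Finset.card_bij' (fun s _ => s \ r) (fun u _ => u ∪ r)
  · intro s hs
    rw [Finset.mem_filter, Finset.mem_powersetCard] at hs
    rw [Finset.mem_powersetCard]
    exact ⟨Finset.sdiff_subset_sdiff hs.1.1 Finset.Subset.rfl,
      by rw [Finset.card_sdiff_of_subset hs.2, hs.1.2]⟩
  · intro u hu
    rw [Finset.mem_powersetCard] at hu
    have hdisj : Disjoint u r := Finset.disjoint_of_subset_left hu.1 Finset.sdiff_disjoint
    rw [Finset.mem_filter, Finset.mem_powersetCard]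
    refine ⟨⟨Finset.union_subset ((hu.1).trans Finset.sdiff_subset) hr, ?_⟩,
      Finset.subset_union_right⟩
    rw [Finset.card_union_of_disjoint hdisj, hu.2]
    omega
  · intro s hs
    rw [Finset.mem_filter] at hs
    exact Finset.sdiff_union_of_subset hs.2
  · intro u hu
    rw [Finset.mem_powersetCard] at hu
    have hdisj : Disjoint u r := Finset.disjoint_of_subset_left hu.1 Finset.sdiff_disjoint
    rw [Finset.union_sdiff_cancel_right hdisj]

lemma count_ext_zero {α : Type*} [DecidableEq α] (A r : Finset α) {m : ℕ}
    (hi : m < r.card) :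
    ((A.powersetCard m).filter (fun s => r ⊆ s)).card = 0 := by
  rw [Finset.card_eq_zero]
  rw [Finset.filter_eq_empty_iff]
  intro s hs
  rw [Finset.mem_powersetCard] at hs
  intro hrs
  have := Finset.card_le_card hrs
  omega

lemma Esf_shift (κ : Fin n → ℝ) (A : Finset (Fin n)) {m : ℕ} (hm : m ≤ A.card) (t : ℝ) :
    Esf (fun x => κ x + t) m A
      = ∑ i ∈ Finset.range (m + 1),
          ((A.card - i).choose (m - i) : ℝ) * Esf κ i A * t ^ (m - i) := by
  classical
  have step1 : Esf (fun x => κ x + t) m A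
      = ∑ s ∈ A.powersetCard m, ∑ r ∈ A.powerset,
          if r ⊆ s then (∏ x ∈ r, κ x) * t ^ (m - r.card) else 0 := by
    unfold Esf
    apply Finset.sum_congr rfl
    intro s hs
    rw [Finset.mem_powersetCard] at hs
    rw [Finset.prod_add]
    have hps : s.powerset = A.powerset.filter (fun r => r ⊆ s) := by
      ext u
      simp only [Finset.mem_powerset, Finset.mem_filter]
      exact ⟨fun h => ⟨h.trans hs.1, h⟩, fun h => h.2⟩
    calc ∑ r ∈ s.powerset, (∏ x ∈ r, κ x) * ∏ _x ∈ s \ r, t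
        = ∑ r ∈ s.powerset, (∏ x ∈ r, κ x) * t ^ (m - r.card) := by
          apply Finset.sum_congr rfl
          intro r hr
          rw [Finset.mem_powerset] at hr
          rw [Finset.prod_const, Finset.card_sdiff_of_subset hr, hs.2]
      _ = _ := by
          rw [hps, Finset.sum_filter]
  rw [step1, Finset.sum_comm]
  have step2 : ∀ r ∈ A.powerset,
      (∑ s ∈ A.powersetCard m, if r ⊆ s then (∏ x ∈ r, κ x) * t ^ (m - r.card) else 0)
        = (((A.powersetCard m).filter (fun s => r ⊆ s)).card : ℝ)
            * ((∏ x ∈ r, κ x) * t ^ (m - r.card)) := by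
    intro r _
    rw [← Finset.sum_filter, Finset.sum_const, nsmul_eq_mul]
  rw [Finset.sum_congr rfl step2, Finset.sum_powerset]
  have step3 : ∀ i ∈ Finset.range (A.card + 1),
      (∑ r ∈ A.powersetCard i,
        (((A.powersetCard m).filter (fun s => r ⊆ s)).card : ℝ)
          * ((∏ x ∈ r, κ x) * t ^ (m - r.card)))
      = if i ≤ m then ((A.card - i).choose (m - i) : ℝ) * Esf κ i A * t ^ (m - i) else 0 := by
    intro i _
    rcases le_or_gt i m with him | him
    · rw [if_pos him, Esf]
      have hterm : ∀ r ∈ A.powersetCard i,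
          (((A.powersetCard m).filter (fun s => r ⊆ s)).card : ℝ)
            * ((∏ x ∈ r, κ x) * t ^ (m - r.card))
          = ((A.card - i).choose (m - i) : ℝ) * (∏ x ∈ r, κ x) * t ^ (m - i) := by
        intro r hr
        rw [Finset.mem_powersetCard] at hr
        rw [count_ext A r hr.1 (hr.2.trans_le him), hr.2]
        ring
      rw [Finset.sum_congr rfl hterm, ← Finset.sum_mul, ← Finset.mul_sum]
    · rw [if_neg (not_le.mpr him)]
      apply Finset.sum_eq_zero
      intro r hr
      rw [Finset.mem_powersetCard] at hr
      rw [count_ext_zero A r (by omega)]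
      simp
  rw [Finset.sum_congr rfl step3, ← Finset.sum_filter]
  have hset : (Finset.range (A.card + 1)).filter (fun i => i ≤ m) = Finset.range (m + 1) := by
    ext x
    simp only [Finset.mem_filter, Finset.mem_range]
    omega
  rw [hset]





/-- prefix positivity: the Garding cone restricts to top segments -/
lemma prefix_pos (κ : Fin n → ℝ) (hdec : Antitone κ) (k : ℕ) (hk : k ≤ n)
    (hG : ∀ m, 1 ≤ m → m ≤ k → 0 < Esf κ m Finset.univ) :
    ∀ j m, 1 ≤ m → m ≤ k → m ≤ j → j ≤ n → 0 < Esf κ m (Aset n j) := by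
  have main : ∀ d, d ≤ n → ∀ m, 1 ≤ m → m ≤ k → m ≤ n - d → 0 < Esf κ m (Aset n (n - d)) := by
    intro d
    induction d with
    | zero =>
      intro _ m h1 h2 _
      rw [Nat.sub_zero, Aset_top]
      exact hG m h1 h2
    | succ d ih =>
      intro hdn
      have hjn : n - (d + 1) < n := by omega
      have hj1 : n - (d + 1) + 1 = n - d := by omega
      set j := n - (d + 1) with hjdef
      intro m
      induction m using Nat.strong_induction_on with
      | _ m ihm =>
        intro h1 h2 h3
        have hmem : (⟨j, hjn⟩ : Fin n) ∈ Aset n (j + 1) := mem_Aset_succ hjn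
        have hrec := Esf_rec κ hmem (m - 1)
        rw [Nat.sub_add_cancel h1, Aset_succ_erase hjn] at hrec
        have hup : 0 < Esf κ m (Aset n (j + 1)) := by
          rw [hj1]
          exact ih (by omega) m h1 h2 (by omega)
        have hprev : 0 < Esf κ (m - 1) (Aset n j) := by
          rcases Nat.eq_zero_or_pos (m - 1) with h0 | hpos
          · rw [h0, Esf_zero]; norm_num
          · exact ihm (m - 1) (by omega) (by omega) (by omega) (by omega)
        rcases lt_or_ge (κ ⟨j, hjn⟩) 0 with hneg | hnonneg
        · have hmul : κ ⟨j, hjn⟩ * Esf κ (m - 1) (Aset n j) < 0 :=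
            mul_neg_of_neg_of_pos hneg hprev
          linarith [hrec]
        · -- all entries of Aset n (j+1) are nonnegative
          have hnn : ∀ i ∈ Aset n (j + 1), 0 ≤ κ i := by
            intro i hi
            have hival : i.val < j + 1 := mem_Aset.mp hi
            have : κ ⟨j, hjn⟩ ≤ κ i := hdec (by
              rw [Fin.le_def]
              exact (by omega : i.val ≤ j))
            linarith
          -- find a positive term in Esf κ m (Aset n (j+1))
          have hex : ∃ s ∈ (Aset n (j + 1)).powersetCard m, 0 < ∏ i ∈ s, κ i := by
            by_contra hcon
            push_neg at hcon
            have : Esf κ m (Aset n (j + 1)) ≤ 0 :=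
              Finset.sum_nonpos fun s hs => not_lt.mp (not_lt.mpr (hcon s hs))
            linarith
          obtain ⟨s, hs, hps⟩ := hex
          rw [Finset.mem_powersetCard] at hs
          have hfac_pos : ∀ i ∈ s, 0 < κ i := by
            intro i hi
            rcases lt_or_ge 0 (κ i) with h | h
            · exact h
            · have hz : κ i = 0 := le_antisymm h (hnn i (hs.1 hi))
              rw [Finset.prod_eq_zero hi hz] at hps
              exact absurd hps (lt_irrefl 0)
          have hsne : s.Nonempty := Finset.card_pos.mp (by omega)
          set a := s.max' hsne with ha
          have hamem : a ∈ s := s.max'_mem hsne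
          have hma : m ≤ a.val + 1 := by
            have hsub : s ⊆ Aset n (a.val + 1) := by
              intro i hi
              rw [mem_Aset]
              have := s.le_max' i hi
              rw [Fin.le_def] at this
              omega
            have := Finset.card_le_card hsub
            rw [card_Aset (by omega : a.val + 1 ≤ n), hs.2] at this
            omega
          have htop_pos : ∀ i ∈ Aset n m, 0 < κ i := by
            intro i hi
            have hival : i.val < m := mem_Aset.mp hi
            have hle : κ a ≤ κ i := hdec (by rw [Fin.le_def]; omega)
            exact lt_of_lt_of_le (hfac_pos a hamem) hle
          have hT : 0 < ∏ i ∈ Aset n m, κ i := Finset.prod_pos htop_pos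
          have hmemT : Aset n m ∈ (Aset n j).powersetCard m := by
            rw [Finset.mem_powersetCard]
            refine ⟨fun i hi => mem_Aset.mpr (by have := mem_Aset.mp hi; omega),
              card_Aset (by omega)⟩
          have hterms : ∀ s' ∈ (Aset n j).powersetCard m, 0 ≤ ∏ i ∈ s', κ i := by
            intro s' hs'
            rw [Finset.mem_powersetCard] at hs'
            exact Finset.prod_nonneg fun i hi => hnn i (by
              have := hs'.1 hi
              rw [mem_Aset] at this ⊢
              omega)
          have := Finset.single_le_sum hterms hmemT
          exact lt_of_lt_of_le hT this
  intro j m h1 h2 h3 h4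
  have := main (n - j) (by omega) m h1 h2 (by omega)
  rwa [show n - (n - j) = j by omega] at this

/-- positivity of leading entries -/
lemma entries_pos (κ : Fin n → ℝ) (hdec : Antitone κ) (k : ℕ) (hk : k ≤ n)
    (hG : ∀ m, 1 ≤ m → m ≤ k → 0 < Esf κ m Finset.univ) :
    ∀ i : Fin n, i.val < k → 0 < κ i := by
  have hprod : ∀ j, j ≤ k → 0 < ∏ i ∈ Aset n j, κ i := by
    intro j hjk
    rcases Nat.eq_zero_or_pos j with rfl | hj1
    · simp [Aset]
    have h := prefix_pos κ hdec k hk hG j j hj1 hjk le_rfl (by omega)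
    rw [Esf] at h
    set A := Aset n j with hA
    have hcard : A.card = j := card_Aset (by omega)
    rw [← hcard, Finset.powersetCard_self, Finset.sum_singleton] at h
    exact h
  intro i hik
  have hsplit : ∏ x ∈ Aset n (i.val + 1), κ x = κ i * ∏ x ∈ Aset n i.val, κ x := by
    rw [Aset_succ i.isLt, Finset.prod_insert (not_mem_Aset i.isLt)]
  have h1 := hprod (i.val + 1) (by omega)
  have h2 := hprod i.val (by omega)
  rw [hsplit] at h1
  by_contra hcon
  push_neg at hcon
  nlinarith

/-- termwise bound: any m-subset product with nonneg entries is at most the top product -/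
lemma term_le (κ : Fin n → ℝ) (hdec : Antitone κ) :
    ∀ m, m ≤ n → ∀ s : Finset (Fin n), s.card = m → (∀ i ∈ s, 0 ≤ κ i) →
      (∀ i : Fin n, i.val < m → 0 < κ i) →
      ∏ i ∈ s, κ i ≤ ∏ i ∈ Aset n m, κ i := by
  intro m
  induction m with
  | zero =>
    intro _ s hs _ _
    rw [Finset.card_eq_zero.mp hs]
    simp [Aset]
  | succ m ihm =>
    intro hm1 s hs hnn hpos
    have hsne : s.Nonempty := Finset.card_pos.mp (by omega)
    set a := s.max' hsne with ha
    have hamem : a ∈ s := s.max'_mem hsne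
    have hma : m ≤ a.val := by
      have hsub : s ⊆ Aset n (a.val + 1) := by
        intro i hi
        rw [mem_Aset]
        have := s.le_max' i hi
        rw [Fin.le_def] at this
        omega
      have := Finset.card_le_card hsub
      rw [card_Aset (by omega : a.val + 1 ≤ n), hs] at this
      omega
    have hm_lt_n : m < n := by omega
    have hcard' : (s.erase a).card = m := by
      rw [Finset.card_erase_of_mem hamem, hs]
      omega
    have hih := ihm (by omega) (s.erase a) hcard'
      (fun i hi => hnn i (Finset.mem_of_mem_erase hi))
      (fun i hi => hpos i (by omega))
    have hT : 0 < ∏ i ∈ Aset n m, κ i :=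
      Finset.prod_pos fun i hi => hpos i (by have := mem_Aset.mp hi; omega)
    have hκa : 0 ≤ κ a := hnn a hamem
    have hκm : κ a ≤ κ ⟨m, hm_lt_n⟩ := hdec (by rw [Fin.le_def]; exact hma)
    have hsplit : ∏ i ∈ s, κ i = κ a * ∏ i ∈ s.erase a, κ i :=
      (Finset.mul_prod_erase s κ hamem).symm
    have hTsucc : ∏ i ∈ Aset n (m + 1), κ i = κ ⟨m, hm_lt_n⟩ * ∏ i ∈ Aset n m, κ i := by
      rw [Aset_succ hm_lt_n, Finset.prod_insert (not_mem_Aset hm_lt_n)]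
    rw [hsplit, hTsucc]
    calc κ a * ∏ i ∈ s.erase a, κ i ≤ κ a * ∏ i ∈ Aset n m, κ i :=
          mul_le_mul_of_nonneg_left hih hκa
      _ ≤ κ ⟨m, hm_lt_n⟩ * ∏ i ∈ Aset n m, κ i :=
          mul_le_mul_of_nonneg_right hκm hT.le

/-- upper bound for esymm in the cone -/
lemma esymm_upper (κ : Fin n → ℝ) (hdec : Antitone κ) (k : ℕ) (hk1 : 1 ≤ k) (hkn : k ≤ n)
    (hG : ∀ m, 1 ≤ m → m ≤ k → 0 < Esf κ m Finset.univ)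
    (m : ℕ) (hm1 : 1 ≤ m) (hmk : m ≤ k) :
    Esf κ m Finset.univ ≤ (n.choose m : ℝ) * ∏ i ∈ Aset n m, κ i := by
  have hA := entries_pos κ hdec k hkn hG
  have hT : 0 < ∏ i ∈ Aset n m, κ i :=
    Finset.prod_pos fun i hi => hA i (by have := mem_Aset.mp hi; omega)
  have termwise : ∀ j, k ≤ j → j ≤ n → (∀ i ∈ Aset n j, 0 ≤ κ i) →
      Esf κ m (Aset n j) ≤ (n.choose m : ℝ) * ∏ i ∈ Aset n m, κ i := by
    intro j hkj hjn hnn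
    have hsum : Esf κ m (Aset n j)
        ≤ ∑ _s ∈ (Aset n j).powersetCard m, ∏ i ∈ Aset n m, κ i := by
      apply Finset.sum_le_sum
      intro s hs
      rw [Finset.mem_powersetCard] at hs
      exact term_le κ hdec m (by omega) s hs.2 (fun i hi => hnn i (hs.1 hi))
        (fun i hi => hA i (by omega))
    rw [Finset.sum_const, nsmul_eq_mul, Finset.card_powersetCard, card_Aset hjn] at hsum
    calc Esf κ m (Aset n j) ≤ (j.choose m : ℝ) * ∏ i ∈ Aset n m, κ i := hsum
      _ ≤ (n.choose m : ℝ) * ∏ i ∈ Aset n m, κ i := by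
          apply mul_le_mul_of_nonneg_right _ hT.le
          exact_mod_cast Nat.choose_le_choose m hjn
  have U : ∀ j, k ≤ j → j ≤ n →
      Esf κ m (Aset n j) ≤ (n.choose m : ℝ) * ∏ i ∈ Aset n m, κ i := by
    intro j hkj
    induction j, hkj using Nat.le_induction with
    | base =>
      intro hn
      exact termwise k le_rfl hn fun i hi => (hA i (mem_Aset.mp hi)).le
    | succ j hkj ihj =>
      intro hjn
      have hjn' : j < n := by omega
      rcases lt_or_ge (κ ⟨j, hjn'⟩) 0 with hneg | hnonneg
      · have hrec := Esf_rec κ (mem_Aset_succ hjn') (m - 1)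
        rw [Nat.sub_add_cancel hm1, Aset_succ_erase hjn'] at hrec
        have hprev : 0 < Esf κ (m - 1) (Aset n j) := by
          rcases Nat.eq_zero_or_pos (m - 1) with h0 | hp
          · rw [h0, Esf_zero]; norm_num
          · exact prefix_pos κ hdec k hkn hG j (m - 1) hp (by omega) (by omega) (by omega)
        have hmul : κ ⟨j, hjn'⟩ * Esf κ (m - 1) (Aset n j) < 0 :=
          mul_neg_of_neg_of_pos hneg hprev
        have := ihj (by omega)
        linarith [hrec]
      · apply termwise (j + 1) (by omega) hjn
        intro i hi
        have hival := mem_Aset.mp hi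
        have : κ ⟨j, hjn'⟩ ≤ κ i := hdec (by rw [Fin.le_def]; exact (by omega : i.val ≤ j))
        linarith
  have := U n (by omega) le_rfl
  rwa [Aset_top] at this




/-- dropping the largest element of a tail keeps positivity one step down (Lin-Trudinger) -/
lemma stepD : ∀ K : ℕ, ∀ κ : Fin n → ℝ, Antitone κ → ∀ j : ℕ, j + K < n →
    (∀ m, 1 ≤ m → m ≤ K → 0 < Esf κ m (Bset n j)) →
    ∀ m, 1 ≤ m → m ≤ K - 1 → 0 < Esf κ m (Bset n (j + 1)) := by
  intro K
  induction K using Nat.strong_induction_on with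
  | _ K ih =>
    intro κ hdec j hjK hG m hm1 hm2
    have hK2 : 2 ≤ K := by omega
    rcases lt_or_eq_of_le hm2 with hmlt | hmeq
    · exact ih (K - 1) (by omega) κ hdec j (by omega)
        (fun m' h1 h2 => hG m' h1 (by omega)) m hm1 (by omega)
    · -- m = K - 1
      by_contra hcon
      push_neg at hcon
      set β := Esf κ (K - 1) (Bset n (j + 1)) with hβ
      have hβle : β ≤ 0 := by rw [hβ, ← hmeq]; exact hcon
      have hcardB1 : (Bset n (j + 1)).card = n - (j + 1) := card_Bset _
      have hKcard : K - 1 ≤ (Bset n (j + 1)).card := by omega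
      set G : ℝ → ℝ := fun t => ∑ i ∈ Finset.range ((K - 1) + 1),
          (((Bset n (j + 1)).card - i).choose ((K - 1) - i) : ℝ)
            * Esf κ i (Bset n (j + 1)) * t ^ ((K - 1) - i) with hGdef
      have hGeq : ∀ t : ℝ, Esf (fun x => κ x + t) (K - 1) (Bset n (j + 1)) = G t :=
        fun t => Esf_shift κ _ hKcard t
      have hG0 : G 0 = β := by
        rw [← hGeq 0, hβ]
        congr 1
        funext x
        ring
      have hmid : ∀ i, 1 ≤ i → i ≤ K - 2 → 0 < Esf κ i (Bset n (j + 1)) := by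
        intro i h1 h2
        exact ih (K - 1) (by omega) κ hdec j (by omega)
          (fun m' hh1 hh2 => hG m' hh1 (by omega)) i h1 (by omega)
      set T : ℝ := 1 - β with hT
      have hT1 : (1 : ℝ) ≤ T := by rw [hT]; linarith
      have hT0 : (0 : ℝ) ≤ T := by linarith
      have hGT : 0 < G T := by
        show 0 < ∑ i ∈ Finset.range ((K - 1) + 1),
          (((Bset n (j + 1)).card - i).choose ((K - 1) - i) : ℝ)
            * Esf κ i (Bset n (j + 1)) * T ^ ((K - 1) - i)
        have h0mem : 0 ∈ Finset.range ((K - 1) + 1) := by simp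
        rw [← Finset.add_sum_erase _ _ h0mem]
        have hK1mem : K - 1 ∈ (Finset.range ((K - 1) + 1)).erase 0 := by
          rw [Finset.mem_erase]
          constructor
          · omega
          · simp
        rw [← Finset.add_sum_erase _ _ hK1mem]
        have hrest : 0 ≤ ∑ i ∈ ((Finset.range ((K - 1) + 1)).erase 0).erase (K - 1),
            (((Bset n (j + 1)).card - i).choose ((K - 1) - i) : ℝ)
              * Esf κ i (Bset n (j + 1)) * T ^ ((K - 1) - i) := by
          apply Finset.sum_nonneg
          intro i hi
          rw [Finset.mem_erase, Finset.mem_erase, Finset.mem_range] at hi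
          have hi1 : 1 ≤ i := by omega
          have hi2 : i ≤ K - 2 := by omega
          apply mul_nonneg (mul_nonneg (by positivity) (hmid i hi1 hi2).le)
          positivity
        have hterm0 : T ^ (K - 1) ≤ (((Bset n (j + 1)).card - 0).choose ((K - 1) - 0) : ℝ)
            * Esf κ 0 (Bset n (j + 1)) * T ^ ((K - 1) - 0) := by
          rw [Esf_zero, mul_one, Nat.sub_zero, Nat.sub_zero]
          have hge1 : (1 : ℝ) ≤ (((Bset n (j + 1)).card).choose (K - 1) : ℝ) := by
            have := Nat.choose_pos hKcard
            exact_mod_cast this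
          nlinarith [pow_nonneg hT0 (K - 1)]
        have htermK : (((Bset n (j + 1)).card - (K - 1)).choose ((K - 1) - (K - 1)) : ℝ)
            * Esf κ (K - 1) (Bset n (j + 1)) * T ^ ((K - 1) - (K - 1)) = β := by
          rw [Nat.sub_self, Nat.choose_zero_right, pow_zero, ← hβ]
          push_cast
          ring
        have hTpow : T ≤ T ^ (K - 1) := by
          calc T = T ^ 1 := (pow_one T).symm
            _ ≤ T ^ (K - 1) := pow_le_pow_right₀ hT1 (by omega)
        rw [htermK]
        linarith
      have hcont : Continuous G := by
        rw [hGdef]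
        apply continuous_finset_sum
        intro i _
        exact continuous_const.mul (continuous_pow _)
      have hIVT := intermediate_value_Icc hT0 hcont.continuousOn
      have h0mem : (0 : ℝ) ∈ Set.Icc (G 0) (G T) := by
        rw [hG0]
        exact ⟨hβle, hGT.le⟩
      obtain ⟨t₀, ht₀mem, ht₀⟩ := hIVT h0mem
      obtain ⟨ht₀0, _⟩ := ht₀mem
      set κ' : Fin n → ℝ := fun x => κ x + t₀ with hκ'
      have hdec' : Antitone κ' := fun a b hab => by
        rw [hκ']
        exact add_le_add_left (hdec hab) t₀
      have hcardBj : (Bset n j).card = n - j := card_Bset _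
      have h1 : ∀ m', 1 ≤ m' → m' ≤ K → 0 < Esf κ' m' (Bset n j) := by
        intro m' hm'1 hm'K
        rw [hκ', Esf_shift κ (Bset n j) (by omega : m' ≤ (Bset n j).card) t₀]
        apply Finset.sum_pos'
        · intro i hi
          rw [Finset.mem_range] at hi
          apply mul_nonneg (mul_nonneg (by positivity) _) (pow_nonneg ht₀0 _)
          rcases Nat.eq_zero_or_pos i with rfl | hip
          · rw [Esf_zero]; norm_num
          · exact (hG i hip (by omega)).le
        · refine ⟨m', by simp, ?_⟩
          rw [Nat.sub_self, Nat.choose_zero_right, pow_zero]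
          push_cast
          rw [one_mul, mul_one]
          exact hG m' hm'1 hm'K
      have h2 : ∀ i, 1 ≤ i → i ≤ K - 2 → 0 < Esf κ' i (Bset n (j + 1)) :=
        fun i ha hb => ih (K - 1) (by omega) κ' hdec' j (by omega)
          (fun m' x y => h1 m' x (by omega)) i ha (by omega)
      have h3 : Esf κ' (K - 1) (Bset n (j + 1)) = 0 := by
        rw [hκ', hGeq t₀, ht₀]
      have hjn' : j < n := by omega
      have h4 : 0 < Esf κ' K (Bset n (j + 1)) := by
        have hrec := Esf_rec κ' (mem_Bset_self hjn') (K - 1)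
        rw [Nat.sub_add_cancel (by omega : 1 ≤ K), Bset_erase hjn'] at hrec
        have hKpos := h1 K (by omega) le_rfl
        rw [hrec, h3, mul_zero, zero_add] at hKpos
        exact hKpos
      -- contradiction via Zzero
      apply Zzero ((Bset n (j + 1)).val.map κ') K hK2
      · rw [Multiset.card_map]
        have : Multiset.card (Bset n (j + 1)).val = (Bset n (j + 1)).card := rfl
        omega
      · intro jj ha hb
        rw [← Esf_eq_mes]
        exact h2 jj ha hb
      · rw [← Esf_eq_mes]
        exact h3
      · rw [← Esf_eq_mes]
        exact h4

/-- iterated tail cone membership -/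
lemma tail_cone (κ : Fin n → ℝ) (hdec : Antitone κ) (k : ℕ) (hkn : k < n)
    (hG : ∀ m, 1 ≤ m → m ≤ k → 0 < Esf κ m Finset.univ) :
    ∀ j, j ≤ k - 1 → ∀ m, 1 ≤ m → m ≤ k - j → 0 < Esf κ m (Bset n j) := by
  intro j
  induction j with
  | zero =>
    intro _ m h1 h2
    rw [Bset_zero]
    exact hG m h1 (by omega)
  | succ j ihj =>
    intro hj1 m h1 h2
    exact stepD (k - j) κ hdec j (by omega)
      (fun m' x y => ihj (by omega) m' x (by omega)) m h1 (by omega)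

/-- index segment [j, j+m) -/
def Sseg (n j m : ℕ) : Finset (Fin n) :=
  Finset.univ.filter (fun i => j ≤ i.val ∧ i.val < j + m)

lemma mem_Sseg {j m : ℕ} {i : Fin n} : i ∈ Sseg n j m ↔ j ≤ i.val ∧ i.val < j + m := by
  simp [Sseg]

lemma Sseg_zero (j : ℕ) : Sseg n j 0 = ∅ := by
  ext i
  simp only [mem_Sseg, Finset.notMem_empty, iff_false]
  omega

lemma Sseg_base (m : ℕ) : Sseg n 0 m = Aset n m := by
  ext i
  simp only [mem_Sseg, mem_Aset]
  omega

lemma not_mem_Sseg {j m : ℕ} (hj : j < n) : (⟨j, hj⟩ : Fin n) ∉ Sseg n (j + 1) m := by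
  have hval : ((⟨j, hj⟩ : Fin n) : ℕ) = j := rfl
  simp only [mem_Sseg, hval]
  omega

lemma Sseg_succ {j m : ℕ} (hj : j < n) :
    Sseg n j (m + 1) = insert (⟨j, hj⟩ : Fin n) (Sseg n (j + 1) m) := by
  ext i
  have hval : ((⟨j, hj⟩ : Fin n) : ℕ) = j := rfl
  simp only [mem_Sseg, Finset.mem_insert, Fin.ext_iff, hval]
  omega

/-- lower bound: segment products below esymm of tails -/
lemma lower_seg (κ : Fin n → ℝ) (hdec : Antitone κ) (k : ℕ) (hkn : k < n)
    (hG : ∀ m, 1 ≤ m → m ≤ k → 0 < Esf κ m Finset.univ) :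
    ∀ m j, j + m ≤ k - 1 → ∏ i ∈ Sseg n j m, κ i ≤ Esf κ m (Bset n j) := by
  intro m
  induction m with
  | zero =>
    intro j _
    rw [Sseg_zero, Esf_zero, Finset.prod_empty]
  | succ m ihm =>
    intro j hjm
    have hk1 : 1 ≤ k := by omega
    have hjn' : j < n := by omega
    have hrec := Esf_rec κ (mem_Bset_self hjn') m
    rw [Bset_erase hjn'] at hrec
    have hA : 0 < κ ⟨j, hjn'⟩ :=
      entries_pos κ hdec k (by omega) hG ⟨j, hjn'⟩ (by
        have : ((⟨j, hjn'⟩ : Fin n) : ℕ) = j := rfl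
        omega)
    have hih := ihm (j + 1) (by omega)
    have hpos2 : 0 < Esf κ (m + 1) (Bset n (j + 1)) :=
      tail_cone κ hdec k hkn hG (j + 1) (by omega) (m + 1) (by omega) (by omega)
    have hsegsplit : ∏ i ∈ Sseg n j (m + 1), κ i
        = κ ⟨j, hjn'⟩ * ∏ i ∈ Sseg n (j + 1) m, κ i := by
      rw [Sseg_succ hjn', Finset.prod_insert (not_mem_Sseg hjn')]
    have hmul : κ ⟨j, hjn'⟩ * ∏ i ∈ Sseg n (j + 1) m, κ i
        ≤ κ ⟨j, hjn'⟩ * Esf κ m (Bset n (j + 1)) :=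
      mul_le_mul_of_nonneg_left hih hA.le
    rw [hrec, hsegsplit]
    linarith


end GammaAux

noncomputable def esymm (n k : ℕ) (κ : Fin n → ℝ) : ℝ :=
  ∑ s ∈ Finset.powersetCard k (Finset.univ : Finset (Fin n)), ∏ i ∈ s, κ i

noncomputable def esymm1 (n m : ℕ) (κ : Fin n → ℝ) (i : Fin n) : ℝ :=
  ∑ s ∈ Finset.powersetCard m ((Finset.univ : Finset (Fin n)).erase i), ∏ j ∈ s, κ j

noncomputable def esymm2 (n m : ℕ) (κ : Fin n → ℝ) (i j : Fin n) : ℝ :=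
  ∑ s ∈ Finset.powersetCard m (((Finset.univ : Finset (Fin n)).erase i).erase j), ∏ l ∈ s, κ l

def GardingCone (n k : ℕ) : Set (Fin n → ℝ) :=
  {κ | ∀ m, 1 ≤ m → m ≤ k → 0 < esymm n m κ}

open GammaAux Finset

theorem kappa_km1_bound (n k : ℕ) (hk : 3 ≤ k) (hkn : k ≤ n)
    (κ : Fin n → ℝ) (hκ : κ ∈ GardingCone n k) (hdec : Antitone κ)
    (h : esymm n (k - 1) κ ≤ esymm n (k - 2) κ) :
    κ ⟨k - 2, by omega⟩ ≤ (n.choose (k - 2) : ℝ) := by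
  have hbridge : ∀ m, esymm n m κ = Esf κ m Finset.univ := fun m => rfl
  have hG : ∀ m, 1 ≤ m → m ≤ k → 0 < Esf κ m Finset.univ := by
    intro m h1 h2
    rw [← hbridge]
    exact hκ m h1 h2
  have hA := entries_pos κ hdec k hkn hG
  have hk2n : k - 2 < n := by omega
  -- upper bound for esymm (k-2)
  have hupper : Esf κ (k - 2) Finset.univ
      ≤ (n.choose (k - 2) : ℝ) * ∏ i ∈ Aset n (k - 2), κ i :=
    esymm_upper κ hdec k (by omega) hkn hG (k - 2) (by omega) (by omega)
  -- lower bound for esymm (k-1)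
  have hlower : ∏ i ∈ Aset n (k - 1), κ i ≤ Esf κ (k - 1) Finset.univ := by
    rcases lt_or_eq_of_le hkn with hlt | heq
    · have := lower_seg κ hdec k hlt hG (k - 1) 0 (by omega)
      rwa [Sseg_base, Bset_zero] at this
    · -- n = k : all entries are positive, use the termwise bound
      have hallpos : ∀ i : Fin n, 0 < κ i := fun i => hA i (by omega)
      have hmem : Aset n (k - 1) ∈ (Finset.univ : Finset (Fin n)).powersetCard (k - 1) := by
        rw [Finset.mem_powersetCard]
        exact ⟨Finset.subset_univ _, card_Aset (by omega)⟩
      have hterms : ∀ s ∈ (Finset.univ : Finset (Fin n)).powersetCard (k - 1),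
          0 ≤ ∏ i ∈ s, κ i :=
        fun s _ => Finset.prod_nonneg fun i _ => (hallpos i).le
      exact Finset.single_le_sum hterms hmem
  have hTpos : 0 < ∏ i ∈ Aset n (k - 2), κ i :=
    Finset.prod_pos fun i hi => hA i (by have := mem_Aset.mp hi; omega)
  have hTsplit : ∏ i ∈ Aset n (k - 1), κ i
      = κ ⟨k - 2, hk2n⟩ * ∏ i ∈ Aset n (k - 2), κ i := by
    rw [show k - 1 = (k - 2) + 1 by omega, Aset_succ hk2n,
      Finset.prod_insert (not_mem_Aset hk2n)]
  rw [hbridge, hbridge] at h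
  have hchain : κ ⟨k - 2, hk2n⟩ * ∏ i ∈ Aset n (k - 2), κ i
      ≤ (n.choose (k - 2) : ℝ) * ∏ i ∈ Aset n (k - 2), κ i := by
    rw [← hTsplit]
    linarith
  exact le_of_mul_le_mul_right hchain hTpos
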